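/- arXiv:1308.2910 — 3 statements merged into one kernel-verified Lean document; each statement's English description precedes it below -/
import Mathlib

section
/- Suppose C > 0 and the trace-type inequality ‖T u‖² ≤ C² q(u) holds for all u ∈ V. Then for every u ∈ V, every ε > 0 and every α ∈ ℝ, the Nitsche quadratic form satisfies a(u) ≥ (1 − C²ε/2) q(u) + (α − 1/(2ε))‖J u‖². -/
open RealInnerProductSpace

/-- Abstract Nitsche coupling form: `a u = q u + α‖J u‖² − ⟪J u, T u⟫`.
If `C > 0` and `‖T u‖² ≤ C² q u` for all `u`, then for every `u`, `ε > 0` and `α`,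
`a u ≥ (1 − C²ε/2) q u + (α − 1/(2ε))‖J u‖²`. -/
theorem nitsche_lower_bound_trace
    {V H : Type*} [AddCommGroup V] [Module ℝ V]
    [NormedAddCommGroup H] [InnerProductSpace ℝ H]
    (q : V → ℝ) (hq : ∀ u, 0 ≤ q u) (J T : V → H) (α : ℝ)
    (a : V → ℝ)
    (ha : ∀ u, a u = q u + α * ‖J u‖ ^ 2 - ⟪J u, T u⟫)
    (C : ℝ) (hC : 0 < C)
    (htrace : ∀ u, ‖T u‖ ^ 2 ≤ C ^ 2 * q u)
    (u : V) (ε : ℝ) (hε : 0 < ε) :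
    a u ≥ (1 - C ^ 2 * ε / 2) * q u + (α - 1 / (2 * ε)) * ‖J u‖ ^ 2 := by
  have h1 : ⟪J u, T u⟫ ≤ ‖J u‖ * ‖T u‖ := real_inner_le_norm _ _
  have h2 := htrace u
  have h3 := sq_nonneg (‖J u‖ - ε * ‖T u‖)
  rw [ha u]
  have hε' : ε ≠ 0 := ne_of_gt hε
  rw [ge_iff_le]
  have key : ⟪J u, T u⟫ ≤ 1 / (2 * ε) * ‖J u‖ ^ 2 + C ^ 2 * ε / 2 * q u := by
    have : ‖J u‖ * ‖T u‖ ≤ 1 / (2 * ε) * ‖J u‖ ^ 2 + ε / 2 * ‖T u‖ ^ 2 := by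
      rw [div_mul_eq_mul_div, div_mul_eq_mul_div, div_add_div _ _ (by positivity : (2:ℝ) * ε ≠ 0) (two_ne_zero), le_div_iff₀ (by positivity)]
      nlinarith
    nlinarith
  nlinarith
end

section
/- Suppose C > 0 and the trace-type inequality ‖T u‖² ≤ C² q(u) holds for all u ∈ V. If the stabilisation parameter satisfies α ≥ C²/2, then for every u ∈ V one has a(u) ≥ (1/2) q(u) + (α − C²/2)‖J u‖²; in particular a(u) ≥ 0 for all u ∈ V. -/
open RealInnerProductSpace

/-- Abstract Nitsche coupling form: `a u = q u + α‖J u‖² − ⟪J u, T u⟫`.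
If `C > 0`, `‖T u‖² ≤ C² q u` for all `u`, and `α ≥ C²/2`, then for every `u`,
`a u ≥ (1/2) q u + (α − C²/2)‖J u‖²`; in particular `a u ≥ 0` for all `u`. -/
theorem nitsche_coercive_lower_bound
    {V H : Type*} [AddCommGroup V] [Module ℝ V]
    [NormedAddCommGroup H] [InnerProductSpace ℝ H]
    (q : V → ℝ) (hq : ∀ u, 0 ≤ q u) (J T : V → H) (α : ℝ)
    (a : V → ℝ)
    (ha : ∀ u, a u = q u + α * ‖J u‖ ^ 2 - ⟪J u, T u⟫)
    (C : ℝ) (hC : 0 < C)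
    (htrace : ∀ u, ‖T u‖ ^ 2 ≤ C ^ 2 * q u)
    (hα : α ≥ C ^ 2 / 2) :
    (∀ u, a u ≥ (1 / 2) * q u + (α - C ^ 2 / 2) * ‖J u‖ ^ 2) ∧
    (∀ u, 0 ≤ a u) := by
  have key : ∀ u, a u ≥ (1 / 2) * q u + (α - C ^ 2 / 2) * ‖J u‖ ^ 2 := by
    intro u
    have h1 : ⟪J u, T u⟫ ≤ ‖J u‖ * ‖T u‖ := real_inner_le_norm _ _
    have h2 := htrace u
    have hC2 : (0:ℝ) < C ^ 2 := by positivity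
    rw [ha u]
    nlinarith [mul_le_mul_of_nonneg_left h1 (le_of_lt hC2),
      sq_nonneg (C ^ 2 * ‖J u‖ - ‖T u‖), mul_pos hC2 hC2]
  exact ⟨key, fun u => by
    have := key u
    have hn : (0:ℝ) ≤ ‖J u‖ ^ 2 := by positivity
    nlinarith [hq u]⟩
end

section
/- Suppose C > 0 and the trace-type inequality ‖T u‖² ≤ C² q(u) holds for all u ∈ V, and suppose that the combined form is nondegenerate in the sense that q(u) = 0 and J u = 0 imply u = 0. If the stabilisation parameter satisfies α > C²/2, then the Nitsche quadratic form is positive definite: a(u) > 0 for every u ≠ 0. -/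
open RealInnerProductSpace

/-- Abstract Nitsche coupling form: `a u = q u + α‖J u‖² − ⟪J u, T u⟫`.
If `C > 0`, `‖T u‖² ≤ C² q u` for all `u`, the combined form is nondegenerate
(`q u = 0` and `J u = 0` imply `u = 0`), and `α > C²/2`, then `a` is positive
definite: `a u > 0` for every `u ≠ 0`. -/
theorem nitsche_positive_definite
    {V H : Type*} [AddCommGroup V] [Module ℝ V]
    [NormedAddCommGroup H] [InnerProductSpace ℝ H]
    (q : V → ℝ) (hq : ∀ u, 0 ≤ q u) (J T : V → H) (α : ℝ)
    (a : V → ℝ)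
    (ha : ∀ u, a u = q u + α * ‖J u‖ ^ 2 - ⟪J u, T u⟫)
    (C : ℝ) (hC : 0 < C)
    (htrace : ∀ u, ‖T u‖ ^ 2 ≤ C ^ 2 * q u)
    (hnd : ∀ u, q u = 0 → J u = 0 → u = 0)
    (hα : α > C ^ 2 / 2) :
    ∀ u : V, u ≠ 0 → 0 < a u := by
  intro u hu
  have h1 := real_inner_le_norm (J u) (T u)
  have h2 := htrace u
  have h3 := hq u
  have hJ : 0 ≤ ‖J u‖ := norm_nonneg _
  have hT : 0 ≤ ‖T u‖ := norm_nonneg _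
  rw [ha]
  -- either q u > 0 or ‖J u‖ > 0
  rcases eq_or_lt_of_le h3 with hq0 | hqpos
  · have hJne : J u ≠ 0 := fun h => hu (hnd u hq0.symm h)
    have hJpos : 0 < ‖J u‖ := norm_pos_iff.mpr hJne
    have hT2 : ‖T u‖ ^ 2 ≤ 0 := by rw [← hq0] at h2; linarith
    have hT0 : ‖T u‖ = 0 := by nlinarith
    nlinarith [sq_nonneg ‖J u‖, mul_pos hJpos hJpos]
  · have hc2 : (0:ℝ) < C ^ 2 := by positivity
    have key : ‖J u‖ * ‖T u‖ ≤ C ^ 2 / 2 * ‖J u‖ ^ 2 + q u / 2 := by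
      nlinarith [sq_nonneg (C ^ 2 * ‖J u‖ - ‖T u‖), h2]
    nlinarith [mul_nonneg (le_of_lt (sub_pos.mpr hα)) (sq_nonneg ‖J u‖)]
end
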